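/- Let r > 1 and C₂ ≥ 0. Suppose u : [0,∞) → ℝ is positive and continuous, and satisfies u(t) ≤ C₂(1+t)^{-r} + ∫₀ᵗ C₁(1+t-s)^{-r} u(s) ds for all t ≥ 0, where C₁ ≥ 0 is small enough that C₁ ∫₀ᵗ (1+t-s)^{-r}(1+s)^{-r} ds ≤ θ(1+t)^{-r} holds for some θ < 1 and all t > 0. Then u(t) ≤ (C₂/(1-θ))(1+t)^{-r} for all t ≥ 0. -/

import Mathlib

open MeasureTheory

/-- Gronwall-type inequality for power-law kernels. -/
theorem gronwall_power_law (r C₁ C₂ θ : ℝ) (hr : 1 < r) (hC₁ : 0 ≤ C₁) (hC₂ : 0 ≤ C₂)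
    (hθ : θ < 1) (u : ℝ → ℝ)
    (hu_pos : ∀ t, 0 ≤ t → 0 < u t)
    (hu_cont : ContinuousOn u (Set.Ici (0 : ℝ)))
    (hineq : ∀ t, 0 ≤ t →
      u t ≤ C₂ * (1 + t) ^ (-r) + ∫ s in (0 : ℝ)..t, C₁ * (1 + t - s) ^ (-r) * u s)
    (hsmall : ∀ t, 0 < t →
      C₁ * ∫ s in (0 : ℝ)..t, (1 + t - s) ^ (-r) * (1 + s) ^ (-r) ≤ θ * (1 + t) ^ (-r)) :
    ∀ t, 0 ≤ t → u t ≤ (C₂ / (1 - θ)) * (1 + t) ^ (-r) := by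
  have hθ0 : 0 ≤ θ := by
    have h := hsmall 1 one_pos
    have hpos : (0:ℝ) < (1 + 1 : ℝ) ^ (-r) := Real.rpow_pos_of_pos (by norm_num) _
    have hint : 0 ≤ ∫ s in (0:ℝ)..1, (1 + 1 - s) ^ (-r) * (1 + s) ^ (-r) := by
      apply intervalIntegral.integral_nonneg (by norm_num)
      intro s hs
      have h1 : (0:ℝ) < 1 + 1 - s := by linarith [hs.2]
      have h2 : (0:ℝ) < 1 + s := by linarith [hs.1]
      positivity
    nlinarith [mul_nonneg hC₁ hint]
  intro T hT
  set v : ℝ → ℝ := fun t => u t * (1 + t) ^ r with hv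
  have hvcont : ContinuousOn v (Set.Icc 0 T) := by
    apply ContinuousOn.mul (hu_cont.mono Set.Icc_subset_Ici_self)
    apply ContinuousOn.rpow_const (continuous_const.add continuous_id).continuousOn
    intro x hx
    left
    have := hx.1
    intro h; simp only [Pi.add_apply, Pi.sub_apply, id_eq] at h; linarith
  obtain ⟨t₀, ht₀mem, ht₀max⟩ := isCompact_Icc.exists_isMaxOn (Set.nonempty_Icc.mpr hT) hvcont
  set M := v t₀ with hM
  have h1t₀ : (0:ℝ) < 1 + t₀ := by linarith [ht₀mem.1]
  have hMpos : 0 < M := mul_pos (hu_pos t₀ ht₀mem.1) (Real.rpow_pos_of_pos h1t₀ _)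
  have hub : ∀ s ∈ Set.Icc (0:ℝ) T, u s ≤ M * (1 + s) ^ (-r) := by
    intro s hs
    have h1 : (0:ℝ) < 1 + s := by linarith [hs.1]
    have hvs : u s * (1 + s) ^ r ≤ M := ht₀max hs
    rw [Real.rpow_neg h1.le, ← div_eq_mul_inv, le_div_iff₀ (Real.rpow_pos_of_pos h1 r)]
    exact hvs
  -- key estimate at t₀
  have hkey : u t₀ ≤ C₂ * (1 + t₀) ^ (-r) + θ * M * (1 + t₀) ^ (-r) := by
    rcases eq_or_lt_of_le ht₀mem.1 with h0 | h0
    · -- t₀ = 0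
      have h := hineq t₀ ht₀mem.1
      rw [← h0] at h ⊢
      simp only [intervalIntegral.integral_same] at h
      have : 0 ≤ θ * M * (1 + (0:ℝ)) ^ (-r) := by positivity
      linarith [h]
    · have hcont1 : ContinuousOn (fun s => C₁ * (1 + t₀ - s) ^ (-r) * u s) (Set.Icc 0 t₀) := by
        apply ContinuousOn.mul _ (hu_cont.mono Set.Icc_subset_Ici_self)
        apply ContinuousOn.mul continuousOn_const
        apply ContinuousOn.rpow_const (continuous_const.sub continuous_id).continuousOn
        intro x hx
        left
        have := hx.2
        intro h; simp only [Pi.add_apply, Pi.sub_apply, id_eq] at h; linarith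
      have hcont2 : ContinuousOn (fun s => C₁ * M * ((1 + t₀ - s) ^ (-r) * (1 + s) ^ (-r)))
          (Set.Icc 0 t₀) := by
        apply ContinuousOn.mul continuousOn_const
        apply ContinuousOn.mul
        · apply ContinuousOn.rpow_const (continuous_const.sub continuous_id).continuousOn
          intro x hx
          left
          have := hx.2
          intro h; simp only [Pi.add_apply, Pi.sub_apply, id_eq] at h; linarith
        · apply ContinuousOn.rpow_const (continuous_const.add continuous_id).continuousOn
          intro x hx
          left
          have := hx.1
          intro h; simp only [Pi.add_apply, Pi.sub_apply, id_eq] at h; linarith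
      have hI : (∫ s in (0:ℝ)..t₀, C₁ * (1 + t₀ - s) ^ (-r) * u s)
          ≤ ∫ s in (0:ℝ)..t₀, C₁ * M * ((1 + t₀ - s) ^ (-r) * (1 + s) ^ (-r)) := by
        apply intervalIntegral.integral_mono_on h0.le
          (hcont1.intervalIntegrable_of_Icc h0.le) (hcont2.intervalIntegrable_of_Icc h0.le)
        intro s hs
        have hus : u s ≤ M * (1 + s) ^ (-r) :=
          hub s ⟨hs.1, le_trans hs.2 ht₀mem.2⟩
        have hk : (0:ℝ) ≤ (1 + t₀ - s) ^ (-r) := by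
          have : (0:ℝ) < 1 + t₀ - s := by linarith [hs.2]
          positivity
        calc C₁ * (1 + t₀ - s) ^ (-r) * u s
            ≤ C₁ * (1 + t₀ - s) ^ (-r) * (M * (1 + s) ^ (-r)) := by
              apply mul_le_mul_of_nonneg_left hus (by positivity)
          _ = C₁ * M * ((1 + t₀ - s) ^ (-r) * (1 + s) ^ (-r)) := by ring
      have hI2 : (∫ s in (0:ℝ)..t₀, C₁ * M * ((1 + t₀ - s) ^ (-r) * (1 + s) ^ (-r)))
          ≤ θ * M * (1 + t₀) ^ (-r) := by
        rw [intervalIntegral.integral_const_mul]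
        have hs := hsmall t₀ h0
        calc C₁ * M * ∫ s in (0:ℝ)..t₀, (1 + t₀ - s) ^ (-r) * (1 + s) ^ (-r)
            = M * (C₁ * ∫ s in (0:ℝ)..t₀, (1 + t₀ - s) ^ (-r) * (1 + s) ^ (-r)) := by ring
          _ ≤ M * (θ * (1 + t₀) ^ (-r)) := mul_le_mul_of_nonneg_left hs hMpos.le
          _ = θ * M * (1 + t₀) ^ (-r) := by ring
      linarith [hineq t₀ ht₀mem.1]
  -- deduce M ≤ C₂ / (1 - θ)
  have hcancel : (1 + t₀) ^ (-r) * (1 + t₀) ^ r = 1 := by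
    rw [← Real.rpow_add h1t₀]; simp
  have hMle : M ≤ C₂ + θ * M := by
    have := mul_le_mul_of_nonneg_right hkey (Real.rpow_pos_of_pos h1t₀ r).le
    have hM' : M = u t₀ * (1 + t₀) ^ r := rfl
    nlinarith [this, hcancel]
  have hMfin : M ≤ C₂ / (1 - θ) := by
    rw [le_div_iff₀ (by linarith : (0:ℝ) < 1 - θ)]
    nlinarith
  have h1T : (0:ℝ) < 1 + T := by linarith
  calc u T ≤ M * (1 + T) ^ (-r) := hub T ⟨hT, le_refl T⟩
    _ ≤ (C₂ / (1 - θ)) * (1 + T) ^ (-r) := by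
        apply mul_le_mul_of_nonneg_right hMfin (by positivity)
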